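/- arXiv:2508.18847 — 3 statements merged into one kernel-verified Lean document; each statement's English description precedes it below -/
import Mathlib

section
/- Let N ≥ 1 be an integer, η ∈ [0,1], and let Y be a Bernoulli(η) random variable. For q in the probability simplex Δ^{N+1} define the risk R(q) := Σ_{i=0}^{N} q_i · E[(Y − i/N)²] = Σ_{i=0}^{N} q_i (η(1 − i/N)² + (1 − η)(i/N)²). Let k ∈ {0, …, N} be any index minimizing |η − i/N| over i ∈ {0, …, N}. Then the deterministic distribution e_k (with (e_k)_k = 1 and (e_k)_j = 0 for j ≠ k) minimizes R over Δ^{N+1}: for every q ∈ Δ^{N+1}, R(e_k) ≤ R(q). In other words, the tokenized Brier score is a proper scoring rule for verbalized confidence. -/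
open MeasureTheory

/-- The tokenized Brier score is a proper scoring rule for verbalized
confidence: for `Y ~ Bernoulli(η)` and `R(q) := Σ_i q_i E[(Y - i/N)²]`, any index `k`
minimizing `|η - i/N|` gives a deterministic distribution `e_k` minimizing `R` over the
probability simplex. -/
theorem tokenized_brier_proper
    {Ω : Type*} [MeasurableSpace Ω] (μ : Measure Ω) [IsProbabilityMeasure μ]
    (Y : Ω → ℝ) (hY : Measurable Y) (hY01 : ∀ ω, Y ω = 0 ∨ Y ω = 1)
    (η : ℝ) (hη0 : 0 ≤ η) (hη1 : η ≤ 1)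
    (hYη : μ {ω | Y ω = 1} = ENNReal.ofReal η)
    (N : ℕ) (hN : 1 ≤ N)
    (k : Fin (N + 1))
    (hk : ∀ i : Fin (N + 1), |η - ((k : ℕ) : ℝ) / (N : ℝ)| ≤ |η - ((i : ℕ) : ℝ) / (N : ℝ)|) :
    ∀ q : Fin (N + 1) → ℝ, (∀ i, 0 ≤ q i) → (∑ i, q i) = 1 →
      (∑ i : Fin (N + 1), (if i = k then (1 : ℝ) else 0) *
          ∫ ω, (Y ω - ((i : ℕ) : ℝ) / (N : ℝ)) ^ 2 ∂μ)
        ≤ ∑ i : Fin (N + 1), q i * ∫ ω, (Y ω - ((i : ℕ) : ℝ) / (N : ℝ)) ^ 2 ∂μ := by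
  intro q hq hq1
  set s : Set Ω := {ω | Y ω = 1} with hs_def
  have hs : MeasurableSet s := hY (measurableSet_singleton 1)
  have hYind : Y = s.indicator (fun _ => (1 : ℝ)) := by
    funext ω
    rcases hY01 ω with h | h
    · simp [Set.indicator, hs_def, h]
    · simp [Set.indicator, hs_def, h]
  have hEY : ∫ ω, Y ω ∂μ = η := by
    rw [hYind]
    rw [MeasureTheory.integral_indicator_const (1 : ℝ) hs, measureReal_def, hYη,
      ENNReal.toReal_ofReal hη0]
    simp
  have hYint : Integrable Y μ := by
    rw [hYind]
    exact (integrable_const (1 : ℝ)).indicator hs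
  -- compute the integral for each constant c
  have key : ∀ c : ℝ, ∫ ω, (Y ω - c) ^ 2 ∂μ = (c - η) ^ 2 + η * (1 - η) := by
    intro c
    have heq : ∀ ω, (Y ω - c) ^ 2 = (1 - 2 * c) * Y ω + c ^ 2 := by
      intro ω
      rcases hY01 ω with h | h <;> rw [h] <;> ring
    calc ∫ ω, (Y ω - c) ^ 2 ∂μ
        = ∫ ω, ((1 - 2 * c) * Y ω + c ^ 2) ∂μ := by
          exact integral_congr_ae (Filter.Eventually.of_forall heq)
      _ = (1 - 2 * c) * ∫ ω, Y ω ∂μ + c ^ 2 := by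
          rw [integral_add (hYint.const_mul _) (integrable_const _),
            integral_const_mul, integral_const]
          simp
      _ = (c - η) ^ 2 + η * (1 - η) := by rw [hEY]; ring
  have hgk : ∀ i : Fin (N + 1),
      ∫ ω, (Y ω - ((k : ℕ) : ℝ) / (N : ℝ)) ^ 2 ∂μ
        ≤ ∫ ω, (Y ω - ((i : ℕ) : ℝ) / (N : ℝ)) ^ 2 ∂μ := by
    intro i
    rw [key, key]
    have h2 : (((k : ℕ) : ℝ) / (N : ℝ) - η) ^ 2 ≤ (((i : ℕ) : ℝ) / (N : ℝ) - η) ^ 2 := by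
      have h := pow_le_pow_left₀ (abs_nonneg _) (hk i) 2
      rw [sq_abs, sq_abs] at h
      nlinarith [h]
    linarith
  have hLHS : (∑ i : Fin (N + 1), (if i = k then (1 : ℝ) else 0) *
      ∫ ω, (Y ω - ((i : ℕ) : ℝ) / (N : ℝ)) ^ 2 ∂μ)
      = ∫ ω, (Y ω - ((k : ℕ) : ℝ) / (N : ℝ)) ^ 2 ∂μ := by
    rw [Finset.sum_eq_single k]
    · simp
    · intro b _ hb; simp [hb]
    · intro h; exact absurd (Finset.mem_univ k) h
  rw [hLHS]
  calc ∫ ω, (Y ω - ((k : ℕ) : ℝ) / (N : ℝ)) ^ 2 ∂μ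
      = ∑ i : Fin (N + 1), q i * ∫ ω, (Y ω - ((k : ℕ) : ℝ) / (N : ℝ)) ^ 2 ∂μ := by
        rw [← Finset.sum_mul, hq1, one_mul]
    _ ≤ ∑ i : Fin (N + 1), q i * ∫ ω, (Y ω - ((i : ℕ) : ℝ) / (N : ℝ)) ^ 2 ∂μ := by
        apply Finset.sum_le_sum
        intro i _
        exact mul_le_mul_of_nonneg_left (hgk i) (hq i)
end

section
/- Let N ≥ 1 be an integer, η ∈ [0,1], and let Y be a Bernoulli(η) random variable. For q ∈ Δ^{N+1} define R(q) := Σ_{i=0}^{N} q_i · E[(Y − i/N)²], and set m := min_{j ∈ {0,…,N}} |η − j/N|. Then q ∈ Δ^{N+1} minimizes R over Δ^{N+1} if and only if q is supported on the set of nearest grid indices, i.e., q_i = 0 for every i with |η − i/N| > m. -/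
open MeasureTheory

/-- For `Y ~ Bernoulli(η)`, `R(q) := Σ_i q_i E[(Y - i/N)²]`, and
`m := min_j |η - j/N|`, a point `q` of the probability simplex minimizes `R` over the
simplex iff `q` is supported on the nearest grid indices, i.e. `q_i = 0` whenever
`|η - i/N| > m`. -/
theorem tokenized_brier_minimizer_characterization
    {Ω : Type*} [MeasurableSpace Ω] (μ : Measure Ω) [IsProbabilityMeasure μ]
    (Y : Ω → ℝ) (hY : Measurable Y) (hY01 : ∀ ω, Y ω = 0 ∨ Y ω = 1)
    (η : ℝ) (hη0 : 0 ≤ η) (hη1 : η ≤ 1)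
    (hYη : μ {ω | Y ω = 1} = ENNReal.ofReal η)
    (N : ℕ) (hN : 1 ≤ N)
    (q : Fin (N + 1) → ℝ) (hq0 : ∀ i, 0 ≤ q i) (hq1 : (∑ i, q i) = 1) :
    (∀ q' : Fin (N + 1) → ℝ, (∀ i, 0 ≤ q' i) → (∑ i, q' i) = 1 →
        (∑ i : Fin (N + 1), q i * ∫ ω, (Y ω - ((i : ℕ) : ℝ) / (N : ℝ)) ^ 2 ∂μ)
          ≤ ∑ i : Fin (N + 1), q' i * ∫ ω, (Y ω - ((i : ℕ) : ℝ) / (N : ℝ)) ^ 2 ∂μ)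
    ↔ (∀ i : Fin (N + 1),
        Finset.univ.inf' Finset.univ_nonempty
            (fun j : Fin (N + 1) => |η - ((j : ℕ) : ℝ) / (N : ℝ)|)
          < |η - ((i : ℕ) : ℝ) / (N : ℝ)| → q i = 0) := by
  classical
  set g : Fin (N + 1) → ℝ := fun j => |η - ((j : ℕ) : ℝ) / (N : ℝ)| with hg
  set m : ℝ := Finset.univ.inf' Finset.univ_nonempty g with hm
  -- integral formula
  have hs : MeasurableSet {ω | Y ω = 1} := hY (measurableSet_singleton 1)
  have hrep : Y = Set.indicator {ω | Y ω = 1} (fun _ => (1 : ℝ)) := by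
    funext ω
    rcases hY01 ω with h | h <;> simp [Set.indicator_apply, h]
  have hYint : Integrable Y μ := by
    rw [hrep]; exact (integrable_const (1 : ℝ)).indicator hs
  have hEY : ∫ ω, Y ω ∂μ = η := by
    conv_lhs => rw [hrep]
    rw [MeasureTheory.integral_indicator_const _ hs, measureReal_def, hYη,
      ENNReal.toReal_ofReal hη0]
    simp
  have hInt : ∀ i : Fin (N + 1),
      ∫ ω, (Y ω - ((i : ℕ) : ℝ) / (N : ℝ)) ^ 2 ∂μ = (g i) ^ 2 + η * (1 - η) := by
    intro i
    set c : ℝ := ((i : ℕ) : ℝ) / (N : ℝ)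
    have hpt : ∀ ω, (Y ω - c) ^ 2 = (1 - 2 * c) * Y ω + c ^ 2 := by
      intro ω; rcases hY01 ω with h | h <;> rw [h] <;> ring
    have hg2 : (g i) ^ 2 = (η - c) ^ 2 := by simp [hg, sq_abs]; rfl
    calc ∫ ω, (Y ω - c) ^ 2 ∂μ = ∫ ω, ((1 - 2 * c) * Y ω + c ^ 2) ∂μ := by
          simp_rw [hpt]
      _ = (1 - 2 * c) * η + c ^ 2 := by
          rw [integral_add (hYint.const_mul _) (integrable_const _),
            integral_const_mul, hEY, integral_const]
          simp
      _ = (g i) ^ 2 + η * (1 - η) := by rw [hg2]; ring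
  -- risk formula
  have hR : ∀ q' : Fin (N + 1) → ℝ, (∑ i, q' i) = 1 →
      (∑ i : Fin (N + 1), q' i * ∫ ω, (Y ω - ((i : ℕ) : ℝ) / (N : ℝ)) ^ 2 ∂μ)
        = (∑ i, q' i * (g i) ^ 2) + η * (1 - η) := by
    intro q' hq'1
    simp_rw [hInt, mul_add]
    rw [Finset.sum_add_distrib, ← Finset.sum_mul, hq'1, one_mul]
  -- basic facts about m
  obtain ⟨j₀, -, hj₀⟩ := Finset.exists_mem_eq_inf' (Finset.univ_nonempty (α := Fin (N + 1))) g
  have hm0 : 0 ≤ m := by rw [hm, hj₀]; exact abs_nonneg _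
  have hmle : ∀ i, m ≤ g i := fun i => Finset.inf'_le g (Finset.mem_univ i)
  have hsq : ∀ i, m ^ 2 ≤ (g i) ^ 2 := fun i => pow_le_pow_left₀ hm0 (hmle i) 2
  -- lower bound on any feasible point
  have hlb : ∀ q' : Fin (N + 1) → ℝ, (∀ i, 0 ≤ q' i) → (∑ i, q' i) = 1 →
      m ^ 2 ≤ ∑ i, q' i * (g i) ^ 2 := by
    intro q' hq'0 hq'1
    calc m ^ 2 = ∑ i, q' i * m ^ 2 := by rw [← Finset.sum_mul, hq'1, one_mul]
      _ ≤ ∑ i, q' i * (g i) ^ 2 :=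
        Finset.sum_le_sum fun i _ => mul_le_mul_of_nonneg_left (hsq i) (hq'0 i)
  constructor
  · intro h i hi
    -- compare against the Dirac at j₀
    set d : Fin (N + 1) → ℝ := fun j => if j = j₀ then 1 else 0 with hd
    have hd0 : ∀ j, 0 ≤ d j := by intro j; by_cases hj : j = j₀ <;> simp [hd, hj]
    have hd1 : (∑ j, d j) = 1 := by simp [hd]
    have hle := h d hd0 hd1
    rw [hR q hq1, hR d hd1] at hle
    have hdg : (∑ j, d j * (g j) ^ 2) = m ^ 2 := by
      rw [hm, hj₀]
      simp [hd, Finset.sum_ite_eq']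
    have hub : (∑ j, q j * (g j) ^ 2) ≤ m ^ 2 := by linarith [hle, hdg.ge]
    have heq : (∑ j, q j * ((g j) ^ 2 - m ^ 2)) = 0 := by
      have := hlb q hq0 hq1
      simp_rw [mul_sub]
      rw [Finset.sum_sub_distrib, ← Finset.sum_mul, hq1, one_mul]
      linarith
    have hzero := (Finset.sum_eq_zero_iff_of_nonneg
      (fun j _ => mul_nonneg (hq0 j) (by linarith [hsq j]))).mp heq i (Finset.mem_univ i)
    have hgi : m ^ 2 < (g i) ^ 2 := by
      have := pow_lt_pow_left₀ hi hm0 (n := 2) (by norm_num)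
      exact this
    rcases mul_eq_zero.mp hzero with h0 | h0
    · exact h0
    · exfalso; nlinarith
  · intro h q' hq'0 hq'1
    rw [hR q hq1, hR q' hq'1]
    have hqval : (∑ i, q i * (g i) ^ 2) = m ^ 2 := by
      have : ∀ i ∈ Finset.univ, q i * (g i) ^ 2 = q i * m ^ 2 := by
        intro i _
        rcases lt_or_ge m (g i) with hlt | hle
        · rw [h i hlt]; ring
        · have : g i = m := le_antisymm hle (hmle i)
          rw [this]
      rw [Finset.sum_congr rfl this, ← Finset.sum_mul, hq1, one_mul]
    rw [hqval]
    have := hlb q' hq'0 hq'1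
    linarith
end

section
/- Let N ≥ 1 be an integer, η ∈ [0,1], and let Y be a Bernoulli(η) random variable. For q ∈ Δ^{N+1} define R(q) := Σ_{i=0}^{N} q_i · E[(Y − i/N)²]. Suppose the index k ∈ {0, …, N} minimizing |η − i/N| is unique, i.e., |η − k/N| < |η − j/N| for every j ≠ k. Then the deterministic distribution e_k is the unique minimizer of R over Δ^{N+1}: R(e_k) < R(q) for every q ∈ Δ^{N+1} with q ≠ e_k. -/
open MeasureTheory

/-- For `Y ~ Bernoulli(η)` and `R(q) := Σ_i q_i E[(Y - i/N)²]`, if the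
index `k` minimizing `|η - i/N|` is unique, then the deterministic distribution `e_k`
is the unique minimizer of `R` over the probability simplex. -/
theorem tokenized_brier_unique_minimizer
    {Ω : Type*} [MeasurableSpace Ω] (μ : Measure Ω) [IsProbabilityMeasure μ]
    (Y : Ω → ℝ) (hY : Measurable Y) (hY01 : ∀ ω, Y ω = 0 ∨ Y ω = 1)
    (η : ℝ) (hη0 : 0 ≤ η) (hη1 : η ≤ 1)
    (hYη : μ {ω | Y ω = 1} = ENNReal.ofReal η)
    (N : ℕ) (hN : 1 ≤ N)
    (k : Fin (N + 1))
    (hk : ∀ j : Fin (N + 1), j ≠ k →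
      |η - ((k : ℕ) : ℝ) / (N : ℝ)| < |η - ((j : ℕ) : ℝ) / (N : ℝ)|) :
    ∀ q : Fin (N + 1) → ℝ, (∀ i, 0 ≤ q i) → (∑ i, q i) = 1 →
      q ≠ (fun j : Fin (N + 1) => if j = k then (1 : ℝ) else 0) →
      (∑ i : Fin (N + 1), (if i = k then (1 : ℝ) else 0) *
          ∫ ω, (Y ω - ((i : ℕ) : ℝ) / (N : ℝ)) ^ 2 ∂μ)
        < ∑ i : Fin (N + 1), q i * ∫ ω, (Y ω - ((i : ℕ) : ℝ) / (N : ℝ)) ^ 2 ∂μ := by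
  intro q hq0 hq1 hqne
  -- Y is an indicator function
  have hset : MeasurableSet {ω | Y ω = 1} := hY (measurableSet_singleton 1)
  have hYind : Y = Set.indicator {ω | Y ω = 1} (fun _ => (1 : ℝ)) := by
    funext ω
    rcases hY01 ω with h | h
    · rw [h, Set.indicator_of_notMem]
      simp only [Set.mem_setOf_eq, h]
      norm_num
    · rw [h, Set.indicator_of_mem]
      exact h
  have hintY : Integrable Y μ := by
    rw [hYind]
    exact (integrable_indicator_iff hset).mpr (integrableOn_const (measure_lt_top μ _).ne)
  have hIY : ∫ ω, Y ω ∂μ = η := by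
    rw [hYind]
    rw [integral_indicator_const _ hset]
    simp [measureReal_def, hYη, ENNReal.toReal_ofReal hη0]
  -- compute the integral for each token value
  have hint : ∀ a : ℝ, ∫ ω, (Y ω - a) ^ 2 ∂μ = (η - a) ^ 2 + η * (1 - η) := by
    intro a
    have heq : ∀ ω, (Y ω - a) ^ 2 = (1 - 2 * a) * Y ω + a ^ 2 := by
      intro ω
      rcases hY01 ω with h | h <;> rw [h] <;> ring
    calc ∫ ω, (Y ω - a) ^ 2 ∂μ = ∫ ω, ((1 - 2 * a) * Y ω + a ^ 2) ∂μ := by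
          exact integral_congr_ae (Filter.Eventually.of_forall heq)
      _ = (1 - 2 * a) * ∫ ω, Y ω ∂μ + a ^ 2 := by
          rw [integral_add ((hintY.const_mul _)) (integrable_const _),
            MeasureTheory.integral_const_mul, integral_const]
          simp
      _ = (1 - 2 * a) * η + a ^ 2 := by rw [hIY]
      _ = (η - a) ^ 2 + η * (1 - η) := by ring
  set c : Fin (N + 1) → ℝ := fun i => ∫ ω, (Y ω - ((i : ℕ) : ℝ) / (N : ℝ)) ^ 2 ∂μ with hc
  have hck : ∀ j : Fin (N + 1), j ≠ k → c k < c j := by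
    intro j hj
    have h := hk j hj
    simp only [hc, hint]
    have : (η - ((k : ℕ) : ℝ) / (N : ℝ)) ^ 2 < (η - ((j : ℕ) : ℝ) / (N : ℝ)) ^ 2 := by
      rw [← sq_abs (η - ((k : ℕ) : ℝ) / (N : ℝ)), ← sq_abs (η - ((j : ℕ) : ℝ) / (N : ℝ))]
      exact pow_lt_pow_left₀ h (abs_nonneg _) (by norm_num)
    linarith
  -- LHS equals c k
  have hLHS : (∑ i : Fin (N + 1), (if i = k then (1 : ℝ) else 0) * c i) = c k := by
    simp [Finset.sum_ite_eq']
  rw [hLHS]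
  -- there exists j ≠ k with q j > 0
  have hex : ∃ j, j ≠ k ∧ 0 < q j := by
    by_contra h
    push_neg at h
    have hzero : ∀ j, j ≠ k → q j = 0 := fun j hj => le_antisymm (h j hj) (hq0 j)
    apply hqne
    funext j
    by_cases hj : j = k
    · subst hj
      simp only [if_pos rfl]
      have := Finset.sum_eq_single j (fun b _ hb => hzero b hb) (fun hb => absurd (Finset.mem_univ j) hb)
      rw [this] at hq1
      exact hq1
    · simp [hj, hzero j hj]
  obtain ⟨j, hjk, hqj⟩ := hex
  have : c k = ∑ i : Fin (N + 1), q i * c k := by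
    rw [← Finset.sum_mul, hq1, one_mul]
  rw [this]
  apply Finset.sum_lt_sum
  · intro i _
    by_cases hi : i = k
    · subst hi; rfl
    · exact mul_le_mul_of_nonneg_left (le_of_lt (hck i hi)) (hq0 i)
  · exact ⟨j, Finset.mem_univ j, mul_lt_mul_of_pos_left (hck j hjk) hqj⟩
end
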